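/- Let p be a prime and S ⊆ ℕ be both p-divisible and p-closed (d ∈ S implies pd ∈ S). Then for all n ∈ ℕ, e_{S,p}(n) = f_{S,p}(n) = C(ν_p(n)+1, 2) · t_S(w(n)), where w(n) = n/p^{ν_p(n)} is the p′-part of n and t_S counts divisors in S. -/

import Mathlib

open scoped Classical

namespace PartArith

/-- `a_μ = ∏ i^{m_i(μ)}`, the product of the parts of `μ`. -/
def aNum {n : ℕ} (μ : Nat.Partition n) : ℕ := μ.parts.prod

/-- `b_μ = ∏ m_i(μ)!`, the product of the factorials of the multiplicities of the parts. -/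
def bNum {n : ℕ} (μ : Nat.Partition n) : ℕ :=
  ∏ i ∈ μ.parts.toFinset, (μ.parts.count i).factorial

/-- `t_S(n)`, the number of divisors of `n` lying in `S`. -/
noncomputable def tS (S : Set ℕ) (n : ℕ) : ℕ := (n.divisors.filter (· ∈ S)).card

/-- `e_{S,p}(n) = ∑_{d ∣ n, d ∈ S} ν_p(d)`. -/
noncomputable def eS (S : Set ℕ) (p n : ℕ) : ℕ :=
  ∑ d ∈ n.divisors.filter (· ∈ S), d.factorization p

/-- `f_{S,p}(n) = |{(r, j) : r ∈ S, j ≥ 1, r·p^j ∣ n}|` (for `n ≥ 1` this set is finite and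
contained in `divisors n × [1, n]`). -/
noncomputable def fS (S : Set ℕ) (p n : ℕ) : ℕ :=
  ((n.divisors ×ˢ Finset.Icc 1 n).filter fun rj => rj.1 ∈ S ∧ rj.1 * p ^ rj.2 ∣ n).card

/-- `S` is `p`-divisible: `p·r ∈ S` (for `r ≥ 1`) implies `r ∈ S`. -/
def PDivisible (S : Set ℕ) (p : ℕ) : Prop := ∀ r : ℕ, 1 ≤ r → p * r ∈ S → r ∈ S

/-- `S` is `p`-closed: `d ∈ S` implies `p·d ∈ S`. -/
def PClosed (S : Set ℕ) (p : ℕ) : Prop := ∀ d ∈ S, p * d ∈ S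

/-- The number of partitions of `n` with all parts in `S`. -/
noncomputable def pCount (S : Set ℕ) (n : ℕ) : ℕ :=
  Fintype.card {μ : Nat.Partition n // ∀ i ∈ μ.parts, i ∈ S}

/-- `a_{P(n,S)} = ∏_{μ ∈ P(n,S)} a_μ`. -/
noncomputable def aProd (S : Set ℕ) (n : ℕ) : ℕ :=
  ∏ μ : {μ : Nat.Partition n // ∀ i ∈ μ.parts, i ∈ S}, aNum μ.1

/-- `b_{P(n,S)} = ∏_{μ ∈ P(n,S)} b_μ`. -/
noncomputable def bProd (S : Set ℕ) (n : ℕ) : ℕ :=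
  ∏ μ : {μ : Nat.Partition n // ∀ i ∈ μ.parts, i ∈ S}, bNum μ.1


/-- **Proposition 4.2 (second part).** Let `p` be a prime and `S ⊆ ℕ` be both `p`-divisible and
`p`-closed.  Then for all `n ≥ 1`,
`e_{S,p}(n) = f_{S,p}(n) = C(ν_p(n)+1, 2) · t_S(w(n))`, where `w(n) = n / p^{ν_p(n)}` is the
`p′`-part of `n`. -/

private lemma mem_S_pow {S : Set ℕ} {p : ℕ} (hp : p.Prime) (hdiv : PDivisible S p)
    (hcl : PClosed S p) (j r : ℕ) (hr : 0 < r) : p ^ j * r ∈ S ↔ r ∈ S := by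
  induction j with
  | zero => simp
  | succ j ih =>
    rw [pow_succ, mul_comm (p ^ j) p, mul_assoc]
    constructor
    · intro h
      have hpos : 1 ≤ p ^ j * r :=
        Nat.one_le_iff_ne_zero.2 (Nat.mul_ne_zero (pow_ne_zero _ hp.pos.ne') hr.ne')
      exact ih.1 (hdiv _ hpos h)
    · intro h
      exact hcl _ (ih.2 h)

private lemma sum_range_id_choose (v : ℕ) :
    ∑ i ∈ Finset.range (v + 1), i = (v + 1).choose 2 := by
  induction v with
  | zero => simp
  | succ v ih =>
    rw [Finset.sum_range_succ, ih]
    have h := Nat.choose_succ_succ (v + 1) 1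
    norm_num at h
    omega

private lemma fact_mul_pow {p : ℕ} (hp : p.Prime) {i d : ℕ} (hd : 0 < d) (hpd : ¬ p ∣ d) :
    (p ^ i * d).factorization p = i := by
  rw [Nat.factorization_mul (pow_ne_zero i hp.pos.ne') hd.ne', Finsupp.add_apply,
    hp.factorization_pow, Finsupp.single_eq_same, Nat.factorization_eq_zero_of_not_dvd hpd]
  omega

private lemma ordCompl_mul_pow {p : ℕ} (hp : p.Prime) {i d : ℕ} (hd : 0 < d) (hpd : ¬ p ∣ d) :
    p ^ i * d / p ^ ((p ^ i * d).factorization p) = d := by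
  rw [fact_mul_pow hp hd hpd, Nat.mul_div_cancel_left _ (pow_pos hp.pos i)]

theorem eS_eq_fS_eq (S : Set ℕ) (p : ℕ) (hp : p.Prime) (hdiv : PDivisible S p)
    (hcl : PClosed S p) (n : ℕ) (hn : 0 < n) :
    eS S p n = fS S p n ∧
    eS S p n = Nat.choose (n.factorization p + 1) 2 * tS S (n / p ^ n.factorization p) := by
  have hn0 : n ≠ 0 := hn.ne'
  set v : ℕ := n.factorization p with hv
  set W : ℕ := n / p ^ v with hWdef
  have hW : p ^ v * W = n := Nat.ordProj_mul_ordCompl_eq_self n p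
  have hWpos : 0 < W := Nat.ordCompl_pos p hn0
  have hpW : ¬ p ∣ W := Nat.not_dvd_ordCompl hp hn0
  set T : Finset ℕ := W.divisors.filter (· ∈ S) with hTdef
  have hT : tS S W = T.card := rfl
  have hSord : ∀ d : ℕ, 0 < d → (d ∈ S ↔ d / p ^ d.factorization p ∈ S) := by
    intro d hd
    conv_lhs => rw [← Nat.ordProj_mul_ordCompl_eq_self d p]
    exact mem_S_pow hp hdiv hcl _ _ (Nat.ordCompl_pos p hd.ne')
  have hvlen : v ≤ n := by
    have h1 : v < p ^ v := Nat.lt_pow_self hp.one_lt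
    have h2 : p ^ v ≤ n := Nat.le_of_dvd hn (Nat.ordProj_dvd n p)
    omega
  have hmemT : ∀ d : ℕ, d ∈ T ↔ d ∣ W ∧ d ∈ S := by
    intro d
    rw [hTdef, Finset.mem_filter, Nat.mem_divisors]
    exact ⟨fun h => ⟨h.1.1, h.2⟩, fun h => ⟨⟨h.1, hWpos.ne'⟩, h.2⟩⟩
  -- Part 1 : eS = choose * t
  have he : eS S p n = (v + 1).choose 2 * tS S W := by
    have h1 : eS S p n = ∑ x ∈ (Finset.range (v + 1)) ×ˢ T, x.1 := by
      refine Finset.sum_nbij' (fun d => (d.factorization p, d / p ^ d.factorization p))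
        (fun x => p ^ x.1 * x.2) ?_ ?_ ?_ ?_ ?_
      · intro d hd
        rw [Finset.mem_filter, Nat.mem_divisors] at hd
        obtain ⟨⟨hdvd, -⟩, hdS⟩ := hd
        have hdpos : 0 < d := Nat.pos_of_dvd_of_pos hdvd hn
        have hle : d.factorization p ≤ v :=
          (hp.pow_dvd_iff_le_factorization hn0).1 (dvd_trans (Nat.ordProj_dvd d p) hdvd)
        rw [Finset.mem_product, Finset.mem_range, hmemT]
        exact ⟨by omega, Nat.ordCompl_dvd_ordCompl_of_dvd hdvd p, (hSord d hdpos).1 hdS⟩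
      · intro x hx
        rw [Finset.mem_product, Finset.mem_range, hmemT] at hx
        obtain ⟨hi, hdvd, hdS⟩ := hx
        have hdpos : 0 < x.2 := Nat.pos_of_dvd_of_pos hdvd hWpos
        rw [Finset.mem_filter, Nat.mem_divisors]
        refine ⟨⟨?_, hn0⟩, (mem_S_pow hp hdiv hcl _ _ hdpos).2 hdS⟩
        rw [← hW]
        exact mul_dvd_mul (pow_dvd_pow p (by omega)) hdvd
      · intro d _
        exact Nat.ordProj_mul_ordCompl_eq_self d p
      · intro x hx
        rw [Finset.mem_product, Finset.mem_range, hmemT] at hx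
        obtain ⟨-, hdvd, -⟩ := hx
        have hdpos : 0 < x.2 := Nat.pos_of_dvd_of_pos hdvd hWpos
        have hpd : ¬ p ∣ x.2 := fun h => hpW (h.trans hdvd)
        exact Prod.ext (fact_mul_pow hp hdpos hpd) (ordCompl_mul_pow hp hdpos hpd)
      · intro d _; rfl
    rw [h1, Finset.sum_product]
    simp only [Finset.sum_const, smul_eq_mul]
    rw [← Finset.mul_sum, sum_range_id_choose, hT, mul_comm]
  -- Part 2 : fS = choose * t
  have hf : fS S p n = (v + 1).choose 2 * tS S W := by
    set A : Finset (ℕ × ℕ) :=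
      (Finset.range (v + 1) ×ˢ Finset.Icc 1 v).filter (fun ij => ij.1 + ij.2 ≤ v) with hAdef
    have hmemA : ∀ x : ℕ × ℕ, x ∈ A ↔ 1 ≤ x.2 ∧ x.1 + x.2 ≤ v := by
      intro x
      rw [hAdef, Finset.mem_filter, Finset.mem_product, Finset.mem_range, Finset.mem_Icc]
      constructor
      · rintro ⟨⟨-, h2⟩, h3⟩; exact ⟨h2.1, h3⟩
      · rintro ⟨h1, h2⟩; exact ⟨⟨by omega, h1, by omega⟩, h2⟩
    have hcardA : A.card = (v + 1).choose 2 := by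
      rw [hAdef, Finset.card_filter, Finset.sum_product]
      have hstep : ∀ i ∈ Finset.range (v + 1),
          (∑ j ∈ Finset.Icc 1 v, if i + j ≤ v then 1 else 0) = v - i := by
        intro i hi
        rw [← Finset.card_filter]
        have heq : (Finset.Icc 1 v).filter (fun j => i + j ≤ v) = Finset.Icc 1 (v - i) := by
          ext j
          simp only [Finset.mem_filter, Finset.mem_Icc]
          omega
        rw [heq, Nat.card_Icc]
        omega
      rw [Finset.sum_congr rfl hstep, ← sum_range_id_choose v]
      calc ∑ i ∈ Finset.range (v + 1), (v - i)
          = ∑ i ∈ Finset.range (v + 1), (v + 1 - 1 - i) :=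
            Finset.sum_congr rfl (fun i _ => by omega)
        _ = ∑ i ∈ Finset.range (v + 1), i := Finset.sum_range_reflect (fun i => i) (v + 1)
    have hcard : fS S p n = (A ×ˢ T).card := by
      refine Finset.card_nbij'
        (fun rj => ((rj.1.factorization p, rj.2), rj.1 / p ^ rj.1.factorization p))
        (fun x => (p ^ x.1.1 * x.2, x.1.2)) ?_ ?_ ?_ ?_
      · intro rj hrj
        dsimp only
        rw [Finset.mem_coe, Finset.mem_filter, Finset.mem_product, Nat.mem_divisors, Finset.mem_Icc] at hrj
        obtain ⟨⟨⟨hdvd, -⟩, hj1, hjn⟩, hrS, hrpj⟩ := hrj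
        have hrpos : 0 < rj.1 := Nat.pos_of_dvd_of_pos hdvd hn
        have hij : rj.1.factorization p + rj.2 ≤ v := by
          refine (hp.pow_dvd_iff_le_factorization hn0).1 ?_
          rw [pow_add]
          exact dvd_trans (mul_dvd_mul_right (Nat.ordProj_dvd rj.1 p) _) hrpj
        rw [Finset.mem_coe, Finset.mem_product, hmemA, hmemT]
        exact ⟨⟨hj1, hij⟩,
          Nat.ordCompl_dvd_ordCompl_of_dvd hdvd p, (hSord _ hrpos).1 hrS⟩
      · intro x hx
        rw [Finset.mem_coe, Finset.mem_product, hmemA, hmemT] at hx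
        obtain ⟨⟨hj1, hij⟩, hdvd, hdS⟩ := hx
        dsimp only
        have hdpos : 0 < x.2 := Nat.pos_of_dvd_of_pos hdvd hWpos
        rw [Finset.mem_coe, Finset.mem_filter, Finset.mem_product, Nat.mem_divisors, Finset.mem_Icc]
        refine ⟨⟨⟨?_, hn0⟩, hj1, by omega⟩, (mem_S_pow hp hdiv hcl _ _ hdpos).2 hdS, ?_⟩
        · rw [← hW]
          exact mul_dvd_mul (pow_dvd_pow p (by omega)) hdvd
        · rw [← hW]
          have heq : p ^ x.1.1 * x.2 * p ^ x.1.2 = p ^ (x.1.1 + x.1.2) * x.2 := by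
            rw [pow_add]; ring
          rw [heq]
          exact mul_dvd_mul (pow_dvd_pow p hij) hdvd
      · intro rj _
        exact Prod.ext (Nat.ordProj_mul_ordCompl_eq_self rj.1 p) rfl
      · intro x hx
        rw [Finset.mem_coe, Finset.mem_product, hmemA, hmemT] at hx
        obtain ⟨-, hdvd, -⟩ := hx
        have hdpos : 0 < x.2 := Nat.pos_of_dvd_of_pos hdvd hWpos
        have hpd : ¬ p ∣ x.2 := fun h => hpW (h.trans hdvd)
        exact Prod.ext (Prod.ext (fact_mul_pow hp hdpos hpd) rfl)
          (ordCompl_mul_pow hp hdpos hpd)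
    rw [hcard, Finset.card_product, hcardA, hT]
  exact ⟨he.trans hf.symm, he⟩

end PartArith
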